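/- arXiv:math/0702504 — 3 statements merged into one kernel-verified Lean document; each statement's English description precedes it below -/
import Mathlib

section
/- Conversely, if q ∈ k is a primitive t-th root of unity and either m = t, or char k = p > 0 and m = t·p^s, then [m choose k]_q = 0 for all 1 ≤ k < m. -/
/-- The Gaussian (q-)binomial coefficient `[m choose j]_q`, defined by the q-Pascal
recursion. -/
noncomputable def qBinom {K : Type*} [Field K] (q : K) : ℕ → ℕ → K
  | _, 0 => 1
  | 0, _ + 1 => 0
  | m + 1, j + 1 => qBinom q m j + q ^ (j + 1) * qBinom q m (j + 1)

open Polynomial Finset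

private lemma qBinom_zero_right {K : Type*} [Field K] (q : K) (m : ℕ) : qBinom q m 0 = 1 := by
  cases m <;> rw [qBinom]

private lemma qBinom_succ {K : Type*} [Field K] (q : K) (m j : ℕ) :
    qBinom q (m + 1) (j + 1) = qBinom q m j + q ^ (j + 1) * qBinom q m (j + 1) := by
  rw [qBinom]

private lemma coeff_prod_qBinom {K : Type*} [Field K] (q : K) :
    ∀ (m a j : ℕ),
      (∏ i ∈ range m, (1 - C (q ^ (a + i)) * X)).coeff j
        = (-1) ^ j * q ^ (a * j + j.choose 2) * qBinom q m j := by
  intro m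
  induction m with
  | zero =>
    intro a j
    cases j with
    | zero => simp [qBinom]
    | succ j => simp [qBinom, Polynomial.coeff_one]
  | succ m ih =>
    intro a j
    have hsplit : (∏ i ∈ range (m + 1), (1 - C (q ^ (a + i)) * X))
        = (∏ i ∈ range m, (1 - C (q ^ ((a + 1) + i)) * X)) - C (q ^ a) *
            ((∏ i ∈ range m, (1 - C (q ^ ((a + 1) + i)) * X)) * X) := by
      rw [Finset.prod_range_succ']
      have h1 : ∀ i ∈ range m, (1 - C (q ^ (a + (i + 1))) * X)
          = (1 - C (q ^ ((a + 1) + i)) * X) := by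
        intro i _
        have h : a + (i + 1) = (a + 1) + i := by omega
        rw [h]
      rw [Finset.prod_congr rfl h1, add_zero]
      ring
    rw [hsplit, coeff_sub, coeff_C_mul]
    cases j with
    | zero =>
      rw [coeff_mul_X_zero, ih (a + 1) 0]
      simp [qBinom_zero_right]
    | succ j =>
      rw [coeff_mul_X, ih (a + 1) (j + 1), ih (a + 1) j, qBinom_succ]
      have hch : (j + 1).choose 2 = j.choose 2 + j := by
        rw [Nat.choose_succ_succ]
        simp [Nat.choose_one_right, Nat.add_comm]
      rw [hch]
      ring

private lemma prod_one_sub_C_pow {K : Type*} [Field K] {q : K} {t : ℕ} (ht : 0 < t)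
    (hq : IsPrimitiveRoot q t) :
    ∏ i ∈ range t, (1 - C (q ^ i) * X) = 1 - X ^ t := by
  classical
  have himg : (range t).image (q ^ ·) = Polynomial.nthRootsFinset t (1 : K) := by
    apply Finset.eq_of_subset_of_card_le
    · intro x hx
      simp only [Finset.mem_image] at hx
      obtain ⟨i, _, rfl⟩ := hx
      exact (Polynomial.mem_nthRootsFinset ht 1).2
        (by rw [← pow_mul, mul_comm, pow_mul, hq.pow_eq_one, one_pow])
    · rw [hq.card_nthRootsFinset, Finset.card_image_of_injOn hq.injOn_pow, Finset.card_range]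
  have h1 : (X : K[X]) ^ t - 1 = ∏ i ∈ range t, (X - C (q ^ i)) := by
    rw [X_pow_sub_one_eq_prod ht hq, ← himg,
      Finset.prod_image (fun i hi j hj h =>
        hq.pow_inj (Finset.mem_range.1 hi) (Finset.mem_range.1 hj) h)]
  have hrev : ∀ (n : ℕ) (f : ℕ → K[X]),
      (∏ i ∈ range n, f i).reverse = ∏ i ∈ range n, (f i).reverse := by
    intro n f
    induction n with
    | zero => simp [Polynomial.reverse]
    | succ n ihn =>
      rw [Finset.prod_range_succ, Finset.prod_range_succ, Polynomial.reverse_mul_of_domain, ihn]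
  have hX : (X : K[X]).reverse = 1 := by
    rw [← one_mul (X : K[X]), Polynomial.reverse_mul_X]
    simpa using Polynomial.reverse_C (1 : K)
  have hL : ((X : K[X]) ^ t - 1).reverse = 1 - X ^ t := by
    have h : (X : K[X]) ^ t - 1 = X ^ t + C (-1) := by simp [sub_eq_add_neg]
    rw [h, Polynomial.reverse_add_C]
    have hXp : ((X : K[X]) ^ t).reverse = 1 := by
      rw [← one_mul ((X : K[X]) ^ t), Polynomial.reverse_mul_X_pow]
      simpa using Polynomial.reverse_C (1 : K)
    rw [hXp]
    simp [sub_eq_add_neg]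
  have hR : ∀ i : ℕ, ((X : K[X]) - C (q ^ i)).reverse = 1 - C (q ^ i) * X := by
    intro i
    have h : (X : K[X]) - C (q ^ i) = X + C (-(q ^ i)) := by simp [sub_eq_add_neg]
    rw [h, Polynomial.reverse_add_C, hX]
    simp [sub_eq_add_neg]
  have h3 := congrArg Polynomial.reverse h1
  rw [hrev, hL] at h3
  rw [Finset.prod_congr rfl fun i _ => (hR i).symm]
  exact h3.symm

private lemma prod_one_sub_C_pow_mul {K : Type*} [Field K] {q : K} {t : ℕ} (ht : 0 < t)
    (hq : IsPrimitiveRoot q t) (N : ℕ) :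
    ∏ i ∈ range (t * N), (1 - C (q ^ i) * X) = ((1 : K[X]) - X ^ t) ^ N := by
  induction N with
  | zero => simp
  | succ N ihN =>
    have hmul : t * (N + 1) = t * N + t := by ring
    rw [hmul, Finset.prod_range_add, ihN]
    have h2 : ∀ i ∈ range t, ((1 : K[X]) - C (q ^ (t * N + i)) * X) = 1 - C (q ^ i) * X := by
      intro i _
      congr 2
      rw [pow_add, pow_mul, hq.pow_eq_one, one_pow, one_mul]
    rw [Finset.prod_congr rfl h2, prod_one_sub_C_pow ht hq, pow_succ]

/-- If `q` is a primitive `t`-th root of unity and either `m = t`, or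
`char K = p > 0` and `m = t·p^s`, then `[m choose j]_q = 0` for all `1 ≤ j < m`. -/
theorem qBinom_vanishing_of_primitiveRoot {K : Type*} [Field K] (q : K) (t : ℕ)
    (hq : IsPrimitiveRoot q t) (m : ℕ)
    (hm : m = t ∨ ∃ p s : ℕ, p.Prime ∧ CharP K p ∧ m = t * p ^ s) :
    ∀ j, 1 ≤ j → j < m → qBinom q m j = 0 := by
  intro j hj1 hjm
  have hm0 : 0 < m := lt_of_le_of_lt (Nat.zero_le _) hjm
  -- find N with m = t * N and (1 - X^t)^N = 1 - X^m
  obtain ⟨N, hN, hpow⟩ : ∃ N : ℕ, m = t * N ∧ ((1 : K[X]) - X ^ t) ^ N = 1 - X ^ m := by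
    rcases hm with rfl | ⟨p, s, hp, hc, rfl⟩
    · exact ⟨1, by rw [mul_one], by rw [pow_one]⟩
    · refine ⟨p ^ s, rfl, ?_⟩
      haveI : Fact p.Prime := ⟨hp⟩
      haveI : CharP K[X] p := Polynomial.instCharP p
      rw [sub_pow_char_pow, one_pow, ← pow_mul]
  have ht : 0 < t := by
    rcases Nat.eq_zero_or_pos t with h0 | h
    · rw [h0, zero_mul] at hN; omega
    · exact h
  have hq0 : q ≠ 0 := by
    intro h
    have := hq.pow_eq_one
    rw [h, zero_pow ht.ne'] at this
    exact zero_ne_one this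
  have hprod : ∏ i ∈ range m, ((1 : K[X]) - C (q ^ (0 + i)) * X) = 1 - X ^ m := by
    have := prod_one_sub_C_pow_mul ht hq N
    rw [← hN, hpow] at this
    rw [← this]
    exact Finset.prod_congr rfl fun i _ => by rw [zero_add]
  have hc := coeff_prod_qBinom q m 0 j
  rw [hprod] at hc
  have hcoeff : ((1 : K[X]) - X ^ m).coeff j = 0 := by
    have hj0 : j ≠ 0 := by omega
    have hjm' : j ≠ m := Nat.ne_of_lt hjm
    rw [coeff_sub, coeff_one, coeff_X_pow, if_neg hj0, if_neg hjm']
    ring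
  rw [hcoeff] at hc
  have h1 : ((-1 : K)) ^ j * q ^ (0 * j + j.choose 2) ≠ 0 :=
    mul_ne_zero (pow_ne_zero _ (neg_ne_zero.2 one_ne_zero)) (pow_ne_zero _ hq0)
  rcases mul_eq_zero.1 hc.symm with h | h
  · exact absurd h h1
  · exact h
end

section
/- Every Lyndon word u of length at least 2 admits a factorization u = vw into Lyndon words v, w with v > w, and among all such factorizations there is one in which v has minimal length; this factorization (the Shirshov standard factorization) is the one used to define the unique standard bracketing of u. -/
/-- Lexicographic order where a proper prefix is greater than the word itself. -/
def plex {X : Type*} [LinearOrder X] (u v : List X) : Prop :=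
  (∃ w a b x y, a < b ∧ u = w ++ a :: x ∧ v = w ++ b :: y) ∨ (v <+: u ∧ v ≠ u)

/-- Lyndon (standard) words: `vw > wv` for every factorization into nonempty words. -/
def IsLyndon {X : Type*} [LinearOrder X] (u : List X) : Prop :=
  u ≠ [] ∧ ∀ v w : List X, v ≠ [] → w ≠ [] → u = v ++ w → plex (w ++ v) (v ++ w)

section Lemmas
variable {X : Type*} [LinearOrder X]

lemma plex_nil_left (v : List X) : ¬ plex [] v := by
  rintro (⟨w, a, b, x, y, hab, h1, h2⟩ | ⟨h1, h2⟩)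
  · exact absurd h1 (by simp)
  · exact h2 (List.prefix_nil.mp h1)

lemma plex_nil_right {u : List X} (h : u ≠ []) : plex u [] :=
  Or.inr ⟨List.nil_prefix, fun he => h he.symm⟩

lemma plex_cons_iff {a b : X} {x y : List X} :
    plex (a :: x) (b :: y) ↔ a < b ∨ (a = b ∧ plex x y) := by
  constructor
  · rintro (⟨w, c, d, x', y', hcd, h1, h2⟩ | ⟨h1, h2⟩)
    · cases w with
      | nil =>
        simp only [List.nil_append, List.cons.injEq] at h1 h2
        exact Or.inl (h1.1 ▸ h2.1 ▸ hcd)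
      | cons e w' =>
        simp only [List.cons_append, List.cons.injEq] at h1 h2
        exact Or.inr ⟨h1.1.trans h2.1.symm,
          Or.inl ⟨w', c, d, x', y', hcd, h1.2, h2.2⟩⟩
    · rw [List.cons_prefix_cons] at h1
      refine Or.inr ⟨h1.1.symm, Or.inr ⟨h1.2, fun he => h2 ?_⟩⟩
      rw [h1.1, he]
  · rintro (hab | ⟨rfl, (⟨w, c, d, x', y', hcd, h1, h2⟩ | ⟨h1, h2⟩)⟩)
    · exact Or.inl ⟨[], a, b, x, y, hab, rfl, rfl⟩
    · exact Or.inl ⟨a :: w, c, d, x', y', hcd, by rw [h1]; rfl, by rw [h2]; rfl⟩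
    · exact Or.inr ⟨List.cons_prefix_cons.mpr ⟨rfl, h1⟩, by simpa using h2⟩

lemma plex_irrefl (u : List X) : ¬ plex u u := by
  induction u with
  | nil => exact plex_nil_left []
  | cons a x ih =>
    rw [plex_cons_iff]
    rintro (h | ⟨-, h⟩)
    · exact lt_irrefl a h
    · exact ih h

lemma plex_trans : ∀ {u v w : List X}, plex u v → plex v w → plex u w := by
  intro u
  induction u with
  | nil => intro v w h _; exact absurd h (plex_nil_left v)
  | cons a x ih =>
    intro v w h1 h2
    cases v with
    | nil => exact absurd h2 (plex_nil_left w)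
    | cons b y =>
      cases w with
      | nil => exact plex_nil_right (List.cons_ne_nil a x)
      | cons c z =>
        rw [plex_cons_iff] at h1 h2 ⊢
        rcases h1 with h1 | ⟨rfl, h1⟩
        · rcases h2 with h2 | ⟨rfl, h2⟩
          · exact Or.inl (h1.trans h2)
          · exact Or.inl h1
        · rcases h2 with h2 | ⟨rfl, h2⟩
          · exact Or.inl h2
          · exact Or.inr ⟨rfl, ih h1 h2⟩

lemma plex_asymm {u v : List X} (h1 : plex u v) (h2 : plex v u) : False :=
  plex_irrefl u (plex_trans h1 h2)

lemma plex_total : ∀ (u v : List X), plex u v ∨ u = v ∨ plex v u := by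
  intro u
  induction u with
  | nil =>
    intro v
    cases v with
    | nil => exact Or.inr (Or.inl rfl)
    | cons b y => exact Or.inr (Or.inr (plex_nil_right (List.cons_ne_nil b y)))
  | cons a x ih =>
    intro v
    cases v with
    | nil => exact Or.inl (plex_nil_right (List.cons_ne_nil a x))
    | cons b y =>
      rcases lt_trichotomy a b with h | rfl | h
      · exact Or.inl (plex_cons_iff.mpr (Or.inl h))
      · rcases ih y with h | rfl | h
        · exact Or.inl (plex_cons_iff.mpr (Or.inr ⟨rfl, h⟩))
        · exact Or.inr (Or.inl rfl)
        · exact Or.inr (Or.inr (plex_cons_iff.mpr (Or.inr ⟨rfl, h⟩)))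
      · exact Or.inr (Or.inr (plex_cons_iff.mpr (Or.inl h)))

lemma plex_append_left_iff (s : List X) {x y : List X} :
    plex (s ++ x) (s ++ y) ↔ plex x y := by
  induction s with
  | nil => rfl
  | cons a s ih => simp [plex_cons_iff, ih]

lemma plex_append_of_plex : ∀ {x y : List X}, x.length = y.length → plex x y →
    ∀ (r r' : List X), plex (x ++ r) (y ++ r') := by
  intro x
  induction x with
  | nil =>
    intro y hlen h
    rw [List.length_nil] at hlen
    rw [List.eq_nil_of_length_eq_zero hlen.symm] at h
    exact absurd h (plex_nil_left [])
  | cons a x ih =>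
    intro y hlen h r r'
    cases y with
    | nil => simp at hlen
    | cons b y =>
      rw [plex_cons_iff] at h
      simp only [List.cons_append]
      rcases h with h | ⟨rfl, h⟩
      · exact plex_cons_iff.mpr (Or.inl h)
      · exact plex_cons_iff.mpr (Or.inr ⟨rfl, ih (by simpa using hlen) h r r'⟩)

omit [LinearOrder X] in
lemma exists_eq_of_append_eq {s t p x : List X} {a : X}
    (h : s ++ t = p ++ a :: x) (hlt : p.length < s.length) :
    ∃ x', s = p ++ a :: x' := by
  refine ⟨s.drop (p.length + 1), ?_⟩
  have h2 : (s ++ t).take (p.length + 1) = s.take (p.length + 1) :=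
    List.take_append_of_le_length (by omega)
  rw [h] at h2
  have h3 : (p ++ a :: x).take (p.length + 1) = p ++ [a] := by
    rw [List.take_append]; simp
  rw [h3] at h2
  conv_lhs => rw [← List.take_append_drop (p.length + 1) s]
  rw [← h2]
  simp

end Lemmas

section Lyndon
variable {X : Type*} [LinearOrder X]

lemma lyndon_unbordered {u s m t : List X} (hu : IsLyndon u)
    (hs : s ≠ []) (hm : m ≠ []) (ht : t ≠ [])
    (h1 : u = s ++ m) (h2 : u = t ++ s) : False := by
  have e1 : plex (m ++ s) (s ++ m) := hu.2 s m hs hm h1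
  have e2 : plex (s ++ t) (t ++ s) := hu.2 t s ht hs h2
  have heq : t ++ s = s ++ m := h2.symm.trans h1
  rw [heq] at e2
  have e4 : plex t m := (plex_append_left_iff s).mp e2
  have hlen : t.length = m.length := by
    have := congrArg List.length heq
    simp only [List.length_append] at this
    omega
  have e5 : plex (t ++ s) (m ++ s) := plex_append_of_plex hlen e4 s s
  rw [heq] at e5
  exact plex_asymm e1 e5

lemma plex_suffix_of_lyndon {u t s : List X} (hu : IsLyndon u)
    (ht : t ≠ []) (hs : s ≠ []) (h : u = t ++ s) : plex s u := by
  rcases hu.2 t s ht hs h with ⟨p, a, b, x, y, hab, h1, h2⟩ | ⟨hpre, hne⟩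
  · -- h1 : s ++ t = p ++ a :: x, h2 : t ++ s = p ++ b :: y
    by_cases hlt : p.length < s.length
    · obtain ⟨x', hx'⟩ := exists_eq_of_append_eq h1 hlt
      exact Or.inl ⟨p, a, b, x', y, hab, hx', by rw [h, h2]⟩
    · push_neg at hlt
      have hsp : s <+: p :=
        List.prefix_of_prefix_length_le (h1 ▸ List.prefix_append s t)
          ⟨a :: x, h1.symm⟩ hlt
      have hsu : s <+: u := hsp.trans (by rw [h, h2]; exact ⟨b :: y, rfl⟩)
      obtain ⟨m, hm⟩ := hsu
      have hmne : m ≠ [] := by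
        intro h0
        rw [h0, List.append_nil] at hm
        have := congrArg List.length h
        rw [← hm] at this
        simp only [List.length_append] at this
        have : t.length = 0 := by omega
        exact ht (List.eq_nil_of_length_eq_zero this)
      exact absurd (lyndon_unbordered hu hs hmne ht hm.symm h) id
  · -- hpre : t ++ s <+: s ++ t
    exact ((hne (hpre.eq_of_length (by simp [Nat.add_comm]))) : False).elim

lemma lyndon_of_suffix {u : List X} (hne : u ≠ [])
    (h : ∀ t s : List X, t ≠ [] → s ≠ [] → u = t ++ s → plex s u) :
    IsLyndon u := by
  refine ⟨hne, fun v w hv hw hvw => ?_⟩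
  rcases h v w hv hw hvw with ⟨p, a, b, x, y, hab, h1, h2⟩ | ⟨hpre, hne2⟩
  · -- h1 : w = p ++ a :: x, h2 : u = p ++ b :: y
    exact Or.inl ⟨p, a, b, x ++ v, y, hab, by rw [h1]; simp, by rw [← hvw, h2]⟩
  · exfalso
    have hl := hpre.length_le
    rw [hvw] at hl
    simp only [List.length_append] at hl
    have : v.length = 0 := by omega
    exact hv (List.eq_nil_of_length_eq_zero this)

lemma exists_plex_max : ∀ (l : List (List X)), l ≠ [] →
    ∃ w ∈ l, ∀ s ∈ l, s ≠ w → plex s w := by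
  intro l
  induction l with
  | nil => simp
  | cons x l ih =>
    intro _
    rcases eq_or_ne l [] with rfl | hl
    · refine ⟨x, by simp, ?_⟩
      intro s hs hne
      simp only [List.mem_singleton] at hs
      exact absurd hs hne
    · obtain ⟨w, hwl, hmax⟩ := ih hl
      rcases plex_total x w with hxw | rfl | hwx
      · refine ⟨w, List.mem_cons_of_mem x hwl, ?_⟩
        intro s hs hne
        rcases List.mem_cons.mp hs with rfl | hs
        · exact hxw
        · exact hmax s hs hne
      · refine ⟨x, List.mem_cons_self, ?_⟩
        intro s hs hne
        rcases List.mem_cons.mp hs with rfl | hs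
        · exact absurd rfl hne
        · exact hmax s hs hne
      · refine ⟨x, List.mem_cons_self, ?_⟩
        intro s hs hne
        rcases List.mem_cons.mp hs with rfl | hs
        · exact absurd rfl hne
        · rcases eq_or_ne s w with rfl | hsw
          · exact hwx
          · exact plex_trans (hmax s hs hsw) hwx

end Lyndon

/-- Every Lyndon word of length at least 2 factors as `u = vw` with `v, w` Lyndon and
`v > w`, and among all such factorizations there is one in which `v` has minimal
length (the Shirshov standard factorization, used to define the standard bracketing). -/
theorem shirshov_factorization {X : Type*} [LinearOrder X] (u : List X)
    (hu : IsLyndon u) (hlen : 2 ≤ u.length) :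
    ∃ v w : List X, u = v ++ w ∧ IsLyndon v ∧ IsLyndon w ∧ plex w v ∧
      ∀ v' w' : List X, u = v' ++ w' → IsLyndon v' → IsLyndon w' → plex w' v' →
        v.length ≤ v'.length := by
  classical
  have hexists : ∃ v w : List X, u = v ++ w ∧ IsLyndon v ∧ IsLyndon w ∧ plex w v := by
    set n := u.length with hn
    have hl : (List.range' 1 (n - 1)).map (fun i => u.drop i) ≠ [] := by
      intro h
      have := congrArg List.length h
      simp only [List.length_map, List.length_range', List.length_nil] at this
      omega
    obtain ⟨w, hwl, hwmax⟩ := exists_plex_max _ hl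
    simp only [List.mem_map] at hwl
    obtain ⟨i, hi, hdrop⟩ := hwl
    rw [List.mem_range'_1] at hi
    set v := u.take i with hv
    have husplit : u = v ++ w := by rw [hv, ← hdrop, List.take_append_drop]
    have hvlen : v.length = i := by rw [hv, List.length_take]; omega
    have hwlen : w.length = n - i := by rw [← hdrop, List.length_drop]
    have hvne : v ≠ [] := by
      intro h; rw [h] at hvlen; simp at hvlen; omega
    have hwne : w ≠ [] := by
      intro h; rw [h] at hwlen; simp at hwlen; omega
    have hmax : ∀ t s : List X, t ≠ [] → s ≠ [] → u = t ++ s → s ≠ w → plex s w := by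
      intro t s ht hs hts hne
      apply hwmax s _ hne
      simp only [List.mem_map]
      refine ⟨t.length, ?_, by rw [hts]; exact List.drop_left⟩
      rw [List.mem_range'_1]
      have ht1 : 0 < t.length := List.length_pos_iff.mpr ht
      have hs1 : 0 < s.length := List.length_pos_iff.mpr hs
      have := congrArg List.length hts
      simp only [List.length_append] at this
      omega
    have hsuf : ∀ t s : List X, t ≠ [] → s ≠ [] → u = t ++ s → plex s u :=
      fun t s ht hs h => plex_suffix_of_lyndon hu ht hs h
    have hwlyn : IsLyndon w := by
      apply lyndon_of_suffix hwne
      intro t' s' ht' hs' hsplit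
      refine hmax (v ++ t') s' (fun h => hvne (List.append_eq_nil_iff.mp h).1) hs'
        (by rw [husplit, hsplit, List.append_assoc]) ?_
      intro he
      have hlw := congrArg List.length hsplit
      simp only [List.length_append] at hlw
      have ht1 : 0 < t'.length := List.length_pos_iff.mpr ht'
      rw [he] at hlw
      omega
    have hvlyn : IsLyndon v := by
      apply lyndon_of_suffix hvne
      intro t s ht hs hsplit
      have hslt : s.length < v.length := by
        have := congrArg List.length hsplit
        simp only [List.length_append] at this
        have ht1 : 0 < t.length := List.length_pos_iff.mpr ht
        omega
      have hsw : u = t ++ (s ++ w) := by rw [husplit, hsplit, List.append_assoc]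
      have h1 : plex (s ++ w) u :=
        hsuf t (s ++ w) ht (fun h => hwne (List.append_eq_nil_iff.mp h).2) hsw
      have h1' := h1
      rcases h1 with ⟨p, a, b, x, y, hab, e1, e2⟩ | ⟨hpre, hne2⟩
      · by_cases hlt : p.length < s.length
        · obtain ⟨x', hx'⟩ := exists_eq_of_append_eq e1 hlt
          have e2' : v ++ w = p ++ b :: y := by rw [← husplit]; exact e2
          obtain ⟨y', hy'⟩ := exists_eq_of_append_eq e2' (by omega)
          exact Or.inl ⟨p, a, b, x', y', hab, hx', hy'⟩
        · push_neg at hlt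
          have hsp : s <+: p := List.prefix_of_prefix_length_le
            (e1 ▸ List.prefix_append s w) ⟨a :: x, e1.symm⟩ hlt
          have hsu : s <+: u := hsp.trans ⟨b :: y, e2.symm⟩
          have hsv : s <+: v := List.prefix_of_prefix_length_le hsu
            ⟨w, husplit.symm⟩ (le_of_lt hslt)
          obtain ⟨z, hz⟩ := hsv
          have hzne : z ≠ [] := by
            intro h0
            rw [h0, List.append_nil] at hz
            rw [← hz] at hslt
            exact lt_irrefl _ hslt
          have husz : u = s ++ (z ++ w) := by
            rw [husplit, ← hz, List.append_assoc]
          rw [husz] at h1'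
          have c2 : plex w (z ++ w) := (plex_append_left_iff s).mp h1'
          have c3 : plex (z ++ w) w := by
            refine hmax s (z ++ w) hs (fun h => hwne (List.append_eq_nil_iff.mp h).2) husz ?_
            intro he
            have := congrArg List.length he
            simp only [List.length_append] at this
            have : 0 < z.length := List.length_pos_iff.mpr hzne
            omega
          exact (plex_asymm c2 c3).elim
      · exfalso
        have hle := hpre.length_le
        rw [hsw] at hle
        simp only [List.length_append] at hle
        have : 0 < t.length := List.length_pos_iff.mpr ht
        omega
    have hwv : plex w v := by
      have h1 := hsuf v w hvne hwne husplit
      rcases h1 with ⟨p, a, b, x, y, hab, e1, e2⟩ | ⟨hpre, hne2⟩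
      · by_cases hlt : p.length < v.length
        · have e2' : v ++ w = p ++ b :: y := by rw [← husplit]; exact e2
          obtain ⟨y', hy'⟩ := exists_eq_of_append_eq e2' hlt
          exact Or.inl ⟨p, a, b, x, y', hab, e1, hy'⟩
        · push_neg at hlt
          have hvp : v <+: p := List.prefix_of_prefix_length_le
            ⟨w, husplit.symm⟩ ⟨b :: y, e2.symm⟩ hlt
          have hvw : v <+: w := hvp.trans ⟨a :: x, e1.symm⟩
          refine Or.inr ⟨hvw, ?_⟩
          intro he
          have hl1 := congrArg List.length e1
          simp only [List.length_append, List.length_cons] at hl1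
          rw [he] at hlt
          omega
      · exfalso
        have hle := hpre.length_le
        rw [husplit] at hle
        simp only [List.length_append] at hle
        have : 0 < v.length := List.length_pos_iff.mpr hvne
        omega
    exact ⟨v, w, husplit, hvlyn, hwlyn, hwv⟩
  let P : ℕ → Prop := fun k =>
    ∃ v w : List X, u = v ++ w ∧ IsLyndon v ∧ IsLyndon w ∧ plex w v ∧ v.length = k
  have hP : ∃ k, P k := by
    obtain ⟨v, w, h1, h2, h3, h4⟩ := hexists
    exact ⟨v.length, v, w, h1, h2, h3, h4, rfl⟩
  obtain ⟨v, w, h1, h2, h3, h4, h5⟩ := Nat.find_spec hP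
  refine ⟨v, w, h1, h2, h3, h4, ?_⟩
  intro v' w' hsplit hv' hw' hplex
  have hmem : P v'.length := ⟨v', w', hsplit, hv', hw', hplex, rfl⟩
  rw [h5]
  exact Nat.find_le hmem
end

section
/- (Replacement of PBW-generators by thin elements.) Let S be an algebra with PBW-generators V over a subalgebra A (with 1 among the basis elements of A), and let ≺ be a complete monoidal order on words in V compatible with the PBW-decomposition. Let T ⊆ S be a set of thin elements — elements of the form c = v^m + Σ α_{ij} a_j W_i with all W_i ≺ v^m and m dividing h(v) (or h(v) = ∞) — such that for each v ∈ V at most one c_v ∈ T has leading term a power of v. Then the set P_T, obtained by replacing each such v by c_v (keeping v alongside c_v when m > 1), with heights h_{P_T}(v) = m and h_{P_T}(c_v) = h(v)/m (and h_{P_T}(c_v) = h(v) when m = 1), is again a set of PBW-generators of S over A. -/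
open scoped Classical

/-- The product `v₁^{n₁} ⋯ v_k^{n_k}` associated to an exponent function `f`,
factors in increasing order. -/
noncomputable def pbwProd {S V : Type*} [Monoid S] [LinearOrder V]
    (emb : V → S) (f : V →₀ ℕ) : S :=
  ((f.support.sort (· ≤ ·)).map fun v => emb v ^ f v).prod

/-- Exponents strictly below the height function. -/
def Restricted {V : Type*} (h : V → ℕ∞) (f : V →₀ ℕ) : Prop :=
  ∀ v, (f v : ℕ∞) < h v

/-- The family of monotone restricted products `a_j · v₁^{n₁} ⋯ v_k^{n_k}`. -/
noncomputable def pbwFam {S J V : Type*} [Monoid S] [LinearOrder V]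
    (a : J → S) (emb : V → S) (h : V → ℕ∞) :
    J × {f : V →₀ ℕ // Restricted h f} → S :=
  fun p => a p.1 * pbwProd emb p.2.1

/-- `V` is a set of PBW-generators of `S` over the subspace with basis `a : J → S`. -/
def IsPBWBasis (k : Type*) {S J V : Type*} [Field k] [Ring S] [Algebra k S]
    [LinearOrder V] (a : J → S) (emb : V → S) (h : V → ℕ∞) : Prop :=
  LinearIndependent k (pbwFam a emb h) ∧
    Submodule.span k (Set.range (pbwFam a emb h)) = ⊤

/-- The monotone word `v₁^{n₁} ⋯ v_k^{n_k}` in the free monoid on `V` associated to an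
exponent function. -/
noncomputable def toWord {V : Type*} [LinearOrder V] (f : V →₀ ℕ) : List V :=
  ((f.support.sort (· ≤ ·)).map fun v => List.replicate (f v) v).flatten

/-- `m` is the leading word of `s` with respect to the PBW-basis `B` and the word
order `ord`: `m` occurs among the words of the PBW-decomposition of `s`, and no word
of the decomposition is `ord`-greater than `m`. -/
def IsLeadingWord {k S J V : Type*} [Field k] [Ring S] [Algebra k S] [LinearOrder V]
    {h : V → ℕ∞} (ord : List V → List V → Prop)
    (B : Module.Basis (J × {f : V →₀ ℕ // Restricted h f}) k S) (s : S) (m : List V) : Prop :=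
  (∃ p ∈ (B.repr s).support, toWord (p.2 : V →₀ ℕ) = m) ∧
    ∀ p ∈ (B.repr s).support, ¬ ord m (toWord (p.2 : V →₀ ℕ))

/-- Division of an extended natural number by a natural number (`⊤ / m = ⊤`). -/
noncomputable def edivE (x : ℕ∞) (m : ℕ) : ℕ∞ :=
  match x with
  | ⊤ => ⊤
  | (n : ℕ) => ((n / m : ℕ) : ℕ∞)

section ToWord
variable {V : Type*} [LinearOrder V]

lemma sort_map_sum {M : Type*} [AddCommMonoid M] (s : Finset V) (g : V → M) :
    ((s.sort (· ≤ ·)).map g).sum = ∑ x ∈ s, g x := by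
  rw [← Finset.sum_map_toList]
  exact ((s.sort_perm_toList (· ≤ ·)).map g).sum_eq

lemma toWord_count (f : V →₀ ℕ) (v : V) : (toWord f).count v = f v := by
  classical
  rw [toWord, List.count_flatten, List.map_map]
  have h1 : (List.count v ∘ fun w => List.replicate (f w) w)
      = fun w => if w = v then f w else 0 := by
    funext w
    rw [Function.comp_apply, List.count_replicate]
    simp
  rw [h1, sort_map_sum, Finset.sum_ite_eq' f.support v (fun w => f w)]
  by_cases hv : v ∈ f.support
  · simp [hv]
  · simp [hv, Finsupp.notMem_support_iff.mp hv]

lemma toWord_injective : Function.Injective (toWord (V := V)) := by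
  intro f g hfg
  ext v
  rw [← toWord_count f v, ← toWord_count g v, hfg]

lemma toWord_sorted (f : V →₀ ℕ) : (toWord f).Pairwise (· ≤ ·) := by
  rw [toWord, List.pairwise_flatten]
  refine ⟨?_, ?_⟩
  · intro l hl
    simp only [List.mem_map] at hl
    obtain ⟨w, _, rfl⟩ := hl
    exact List.pairwise_replicate.2 (Or.inr le_rfl)
  · rw [List.pairwise_map]
    refine List.Pairwise.imp_of_mem ?_ (f.support.pairwise_sort (· ≤ ·))
    intro x y _ _ hxy
    intro u hu w hw
    rw [List.eq_of_mem_replicate hu, List.eq_of_mem_replicate hw]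
    exact hxy

lemma pbwProd_eq_prod_map {S : Type*} [Monoid S] (emb : V → S) (f : V →₀ ℕ) :
    pbwProd emb f = ((toWord f).map emb).prod := by
  rw [toWord, pbwProd, List.map_flatten, List.map_map, List.prod_flatten, List.map_map]
  congr 1
  apply List.map_congr_left
  intro w _
  simp [List.prod_replicate]

end ToWord

section OrdAux

lemma exists_ord_max {α : Type*} (r : α → α → Prop)
    (htrans : ∀ u v w, r u v → r v w → r u w)
    (htri : ∀ u v, r u v ∨ u = v ∨ r v u)
    (s : Finset α) (hs : s.Nonempty) : ∃ m ∈ s, ∀ x ∈ s, x = m ∨ r x m := by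
  classical
  induction s using Finset.induction with
  | empty => exact absurd hs (by simp)
  | @insert a s ha ih =>
    rcases s.eq_empty_or_nonempty with rfl | hne
    · refine ⟨a, Finset.mem_insert_self _ _, ?_⟩
      intro x hx
      simp only [LawfulSingleton.insert_empty_eq, Finset.mem_singleton] at hx
      exact Or.inl hx
    · obtain ⟨m, hm, hmax⟩ := ih hne
      rcases htri a m with hr | hr | hr
      · refine ⟨m, Finset.mem_insert_of_mem hm, ?_⟩
        intro x hx
        rcases Finset.mem_insert.mp hx with rfl | hx
        · exact Or.inr hr
        · exact hmax x hx
      · subst hr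
        exact ⟨a, Finset.mem_insert_self _ _, fun x hx => by
          rcases Finset.mem_insert.mp hx with rfl | hx
          · exact Or.inl rfl
          · exact hmax x hx⟩
      · refine ⟨a, Finset.mem_insert_self _ _, ?_⟩
        intro x hx
        rcases Finset.mem_insert.mp hx with rfl | hx
        · exact Or.inl rfl
        · rcases hmax x hx with rfl | hx'
          · exact Or.inr hr
          · exact Or.inr (htrans _ _ _ hx' hr)

variable {k S J V : Type*} [Field k] [Ring S] [Algebra k S] [LinearOrder V] {h : V → ℕ∞}

/-- Span of basis elements with PBW-word strictly `ord`-below `u`. -/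
noncomputable def Mlt (ord : List V → List V → Prop)
    (B : Module.Basis (J × {f : V →₀ ℕ // Restricted h f}) k S) (u : List V) : Submodule k S :=
  Submodule.span k (B '' {p | ord (toWord (p.2 : V →₀ ℕ)) u})

/-- Span of basis elements with PBW-word `ord`-at-most `u`. -/
noncomputable def Mle (ord : List V → List V → Prop)
    (B : Module.Basis (J × {f : V →₀ ℕ // Restricted h f}) k S) (u : List V) : Submodule k S :=
  Submodule.span k
    (B '' {p | toWord (p.2 : V →₀ ℕ) = u ∨ ord (toWord (p.2 : V →₀ ℕ)) u})

variable {ord : List V → List V → Prop}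
  {B : Module.Basis (J × {f : V →₀ ℕ // Restricted h f}) k S}

lemma Mle_le_Mle (htrans : ∀ u v w, ord u v → ord v w → ord u w) {u u' : List V}
    (hu : u = u' ∨ ord u u') : Mle ord B u ≤ Mle ord B u' := by
  apply Submodule.span_mono
  apply Set.image_mono
  intro p hp
  rcases hp with he | hlt <;> rcases hu with rfl | hu'
  · exact Or.inl he
  · exact Or.inr (he ▸ hu')
  · exact Or.inr hlt
  · exact Or.inr (htrans _ _ _ hlt hu')

lemma Mlt_le_Mle : Mlt ord B u ≤ Mle ord B u :=
  Submodule.span_mono (Set.image_mono fun p hp => Or.inr hp)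

lemma Mle_le_Mlt (htrans : ∀ u v w, ord u v → ord v w → ord u w) {u u' : List V}
    (hu : ord u u') : Mle ord B u ≤ Mlt ord B u' := by
  apply Submodule.span_mono
  apply Set.image_mono
  intro p hp
  rcases hp with he | hlt
  · show ord (toWord (p.2 : V →₀ ℕ)) u'
    rw [he]; exact hu
  · exact htrans _ _ _ hlt hu

lemma Mlt_le_Mlt (htrans : ∀ u v w, ord u v → ord v w → ord u w) {u u' : List V}
    (hu : u = u' ∨ ord u u') : Mlt ord B u ≤ Mlt ord B u' := by
  apply Submodule.span_mono
  apply Set.image_mono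
  intro p hp
  rcases hu with rfl | hu'
  · exact hp
  · exact htrans _ _ _ hp hu'

lemma mem_Mle_self (p : J × {f : V →₀ ℕ // Restricted h f}) :
    B p ∈ Mle ord B (toWord (p.2 : V →₀ ℕ)) :=
  Submodule.subset_span ⟨p, Or.inl rfl, rfl⟩

lemma ordle_append (hordMon : ∀ u v c d : List V, ord u v → ord (c ++ u ++ d) (c ++ v ++ d))
    (htrans : ∀ u v w, ord u v → ord v w → ord u w)
    {u u' v v' : List V} (h1 : u = u' ∨ ord u u') (h2 : v = v' ∨ ord v v') :
    u ++ v = u' ++ v' ∨ ord (u ++ v) (u' ++ v') := by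
  have step1 : ∀ x y z : List V, ord x y → ord (x ++ z) (y ++ z) := fun x y z hxy => by
    simpa using hordMon x y [] z hxy
  have step2 : ∀ x y z : List V, ord x y → ord (z ++ x) (z ++ y) := fun x y z hxy => by
    simpa using hordMon x y z [] hxy
  rcases h1 with rfl | h1' <;> rcases h2 with rfl | h2'
  · exact Or.inl rfl
  · exact Or.inr (step2 _ _ _ h2')
  · exact Or.inr (step1 _ _ _ h1')
  · exact Or.inr (htrans _ _ _ (step1 _ _ _ h1') (step2 _ _ _ h2'))

lemma ordlt_append_left (hordMon : ∀ u v c d : List V, ord u v → ord (c ++ u ++ d) (c ++ v ++ d))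
    (htrans : ∀ u v w, ord u v → ord v w → ord u w)
    {u u' v v' : List V} (h1 : ord u u') (h2 : v = v' ∨ ord v v') :
    ord (u ++ v) (u' ++ v') := by
  have base : ord (u ++ v) (u' ++ v) := by simpa using hordMon u u' [] v h1
  rcases h2 with rfl | h2'
  · exact base
  · exact htrans _ _ _ base (by simpa using hordMon v v' u' [] h2')

lemma ordlt_append_right (hordMon : ∀ u v c d : List V, ord u v → ord (c ++ u ++ d) (c ++ v ++ d))
    (htrans : ∀ u v w, ord u v → ord v w → ord u w)
    {u u' v v' : List V} (h1 : u = u' ∨ ord u u') (h2 : ord v v') :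
    ord (u ++ v) (u' ++ v') := by
  have base : ord (u ++ v) (u ++ v') := by simpa using hordMon v v' u [] h2
  rcases h1 with rfl | h1'
  · exact base
  · exact htrans _ _ _ base (by simpa using hordMon u u' [] v' h1')

end OrdAux

section Compat
variable {k S J V : Type*} [Field k] [Ring S] [Algebra k S] [LinearOrder V] {h : V → ℕ∞}
variable {a : J → S} {emb : V → S}
variable {ord : List V → List V → Prop} {B : Module.Basis (J × {f : V →₀ ℕ // Restricted h f}) k S}

lemma prodList_mem_Mle
    (hordTrans : ∀ u v w, ord u v → ord v w → ord u w)
    (hordTri : ∀ u v, ord u v ∨ u = v ∨ ord v u)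
    (hordWF : WellFounded ord)
    (hcompat : ∀ (l : List (J ⊕ V)) (m : List V),
      IsLeadingWord ord B ((l.map (Sum.elim a emb)).prod) m →
      ¬ ord (l.filterMap fun x => x.elim (fun _ => none) some) m)
    (l : List (J ⊕ V)) :
    (l.map (Sum.elim a emb)).prod ∈
      Mle ord B (l.filterMap fun x => x.elim (fun _ => none) some) := by
  classical
  set s := (l.map (Sum.elim a emb)).prod with hs
  set w := l.filterMap fun x => x.elim (fun _ => none) some with hw
  have hirr : ∀ x, ¬ ord x x := fun x => (hordWF.isIrrefl).irrefl x
  rw [Mle, Module.Basis.mem_span_image]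
  intro p hp
  rw [Finset.mem_coe] at hp
  obtain ⟨m, hm, hmax⟩ := exists_ord_max ord hordTrans hordTri
    ((B.repr s).support.image fun q => toWord (q.2 : V →₀ ℕ))
    ⟨_, Finset.mem_image_of_mem _ hp⟩
  have hlead : IsLeadingWord ord B s m := by
    constructor
    · obtain ⟨q, hq, hqm⟩ := Finset.mem_image.mp hm
      exact ⟨q, hq, hqm⟩
    · intro q hq hordmq
      rcases hmax _ (Finset.mem_image_of_mem _ hq) with he | hlt
      · rw [he] at hordmq
        exact hirr m hordmq
      · exact hirr m (hordTrans _ _ _ hordmq hlt)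
  have hnot := hcompat l m hlead
  have hmw : m = w ∨ ord m w := by
    rcases hordTri m w with h1 | h1 | h1
    · exact Or.inr h1
    · exact Or.inl h1
    · exact absurd h1 hnot
  simp only [Set.mem_setOf_eq]
  rcases hmax _ (Finset.mem_image_of_mem _ hp) with he | hlt
  · rcases hmw with hmw' | hmw'
    · exact Or.inl (he.trans hmw')
    · exact Or.inr (he ▸ hmw')
  · rcases hmw with hmw' | hmw'
    · exact Or.inr (hmw' ▸ hlt)
    · exact Or.inr (hordTrans _ _ _ hlt hmw')

lemma mul_mem_span_aux {k S : Type*} [Field k] [Ring S] [Algebra k S] {I : Type*}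
    (B : Module.Basis I k S) {P Q R : Set I} {s t : S}
    (hcore : ∀ p ∈ P, ∀ q ∈ Q, B p * B q ∈ Submodule.span k (B '' R))
    (hs : s ∈ Submodule.span k (B '' P)) (ht : t ∈ Submodule.span k (B '' Q)) :
    s * t ∈ Submodule.span k (B '' R) := by
  induction hs using Submodule.span_induction with
  | mem x hx =>
    obtain ⟨p, hp, rfl⟩ := hx
    induction ht using Submodule.span_induction with
    | mem y hy => obtain ⟨q, hq, rfl⟩ := hy; exact hcore p hp q hq
    | zero => simp
    | add y z _ _ hy hz => rw [mul_add]; exact add_mem hy hz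
    | smul c y _ hy => rw [mul_smul_comm]; exact Submodule.smul_mem _ _ hy
  | zero => rw [zero_mul]; exact zero_mem _
  | add y z _ _ hy hz => rw [add_mul]; exact add_mem hy hz
  | smul c y _ hy => rw [smul_mul_assoc]; exact Submodule.smul_mem _ _ hy

lemma basis_eq_prodList (hB : ∀ p, B p = pbwFam a emb h p)
    (p : J × {f : V →₀ ℕ // Restricted h f}) :
    (B p : S) =
      ((Sum.inl p.1 :: (toWord (p.2 : V →₀ ℕ)).map Sum.inr).map (Sum.elim a emb)).prod := by
  rw [hB, pbwFam, pbwProd_eq_prod_map]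
  simp [List.map_map]

lemma filterMap_word (j : J) (w : List V) :
    ((Sum.inl j :: w.map Sum.inr).filterMap
      fun x : J ⊕ V => x.elim (fun _ => none) some) = w := by
  simp [List.filterMap_cons, List.filterMap_map, Function.comp_def]

lemma filterMap_word' (w : List V) :
    ((w.map (Sum.inr : V → J ⊕ V)).filterMap
      fun x : J ⊕ V => x.elim (fun _ => none) some) = w := by
  simp [List.filterMap_map, Function.comp_def]

lemma mul_mem_Mle_Mle (hB : ∀ p, B p = pbwFam a emb h p)
    (hordTrans : ∀ u v w, ord u v → ord v w → ord u w)
    (hordTri : ∀ u v, ord u v ∨ u = v ∨ ord v u)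
    (hordWF : WellFounded ord)
    (hordMon : ∀ u v c d : List V, ord u v → ord (c ++ u ++ d) (c ++ v ++ d))
    (hcompat : ∀ (l : List (J ⊕ V)) (m : List V),
      IsLeadingWord ord B ((l.map (Sum.elim a emb)).prod) m →
      ¬ ord (l.filterMap fun x => x.elim (fun _ => none) some) m)
    {s t : S} {u v : List V} (hs : s ∈ Mle ord B u) (ht : t ∈ Mle ord B v) :
    s * t ∈ Mle ord B (u ++ v) := by
  rw [Mle] at hs ht ⊢
  refine mul_mem_span_aux B ?_ hs ht
  intro p hp q hq
  have key := prodList_mem_Mle hordTrans hordTri hordWF hcompat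
      ((Sum.inl p.1 :: (toWord (p.2 : V →₀ ℕ)).map Sum.inr) ++
        (Sum.inl q.1 :: (toWord (q.2 : V →₀ ℕ)).map Sum.inr))
  rw [List.map_append, List.prod_append, ← basis_eq_prodList hB p, ← basis_eq_prodList hB q,
      List.filterMap_append, filterMap_word, filterMap_word] at key
  have hle := Mle_le_Mle (B := B) hordTrans (ordle_append hordMon hordTrans hp hq)
  rw [Mle, Mle] at hle
  exact hle key

lemma mul_mem_Mlt_Mle (hB : ∀ p, B p = pbwFam a emb h p)
    (hordTrans : ∀ u v w, ord u v → ord v w → ord u w)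
    (hordTri : ∀ u v, ord u v ∨ u = v ∨ ord v u)
    (hordWF : WellFounded ord)
    (hordMon : ∀ u v c d : List V, ord u v → ord (c ++ u ++ d) (c ++ v ++ d))
    (hcompat : ∀ (l : List (J ⊕ V)) (m : List V),
      IsLeadingWord ord B ((l.map (Sum.elim a emb)).prod) m →
      ¬ ord (l.filterMap fun x => x.elim (fun _ => none) some) m)
    {s t : S} {u v : List V} (hs : s ∈ Mlt ord B u) (ht : t ∈ Mle ord B v) :
    s * t ∈ Mlt ord B (u ++ v) := by
  rw [Mlt] at hs ⊢
  rw [Mle] at ht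
  refine mul_mem_span_aux B ?_ hs ht
  intro p hp q hq
  have key := prodList_mem_Mle hordTrans hordTri hordWF hcompat
      ((Sum.inl p.1 :: (toWord (p.2 : V →₀ ℕ)).map Sum.inr) ++
        (Sum.inl q.1 :: (toWord (q.2 : V →₀ ℕ)).map Sum.inr))
  rw [List.map_append, List.prod_append, ← basis_eq_prodList hB p, ← basis_eq_prodList hB q,
      List.filterMap_append, filterMap_word, filterMap_word] at key
  have hle := Mle_le_Mlt (B := B) hordTrans (ordlt_append_left hordMon hordTrans hp hq)
  rw [Mle, Mlt] at hle
  exact hle key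

lemma mul_mem_Mle_Mlt (hB : ∀ p, B p = pbwFam a emb h p)
    (hordTrans : ∀ u v w, ord u v → ord v w → ord u w)
    (hordTri : ∀ u v, ord u v ∨ u = v ∨ ord v u)
    (hordWF : WellFounded ord)
    (hordMon : ∀ u v c d : List V, ord u v → ord (c ++ u ++ d) (c ++ v ++ d))
    (hcompat : ∀ (l : List (J ⊕ V)) (m : List V),
      IsLeadingWord ord B ((l.map (Sum.elim a emb)).prod) m →
      ¬ ord (l.filterMap fun x => x.elim (fun _ => none) some) m)
    {s t : S} {u v : List V} (hs : s ∈ Mle ord B u) (ht : t ∈ Mlt ord B v) :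
    s * t ∈ Mlt ord B (u ++ v) := by
  rw [Mle] at hs
  rw [Mlt] at ht ⊢
  refine mul_mem_span_aux B ?_ hs ht
  intro p hp q hq
  have key := prodList_mem_Mle hordTrans hordTri hordWF hcompat
      ((Sum.inl p.1 :: (toWord (p.2 : V →₀ ℕ)).map Sum.inr) ++
        (Sum.inl q.1 :: (toWord (q.2 : V →₀ ℕ)).map Sum.inr))
  rw [List.map_append, List.prod_append, ← basis_eq_prodList hB p, ← basis_eq_prodList hB q,
      List.filterMap_append, filterMap_word, filterMap_word] at key
  have hle := Mle_le_Mlt (B := B) hordTrans (ordlt_append_right hordMon hordTrans hp hq)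
  rw [Mle, Mlt] at hle
  exact hle key

lemma word_prod_mem_Mle
    (hordTrans : ∀ u v w, ord u v → ord v w → ord u w)
    (hordTri : ∀ u v, ord u v ∨ u = v ∨ ord v u)
    (hordWF : WellFounded ord)
    (hcompat : ∀ (l : List (J ⊕ V)) (m : List V),
      IsLeadingWord ord B ((l.map (Sum.elim a emb)).prod) m →
      ¬ ord (l.filterMap fun x => x.elim (fun _ => none) some) m)
    (w : List V) : (w.map emb).prod ∈ Mle ord B w := by
  have key := prodList_mem_Mle hordTrans hordTri hordWF hcompat (w.map Sum.inr)
  rw [filterMap_word', List.map_map] at key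
  simpa using key

end Compat

section Thin
variable {k S J V : Type*} [Field k] [Ring S] [Algebra k S] [LinearOrder V] {h : V → ℕ∞}
variable {a : J → S} {emb : V → S}
variable {ord : List V → List V → Prop} {B : Module.Basis (J × {f : V →₀ ℕ // Restricted h f}) k S}
variable {V2 : Type*} [LinearOrder V2]

/-- The word in `V` obtained by replacing each letter `x` by `(π x)^(wt x)`. -/
def mainWord (π : V2 → V) (wt : V2 → ℕ) (L : List V2) : List V :=
  (L.map fun x => List.replicate (wt x) (π x)).flatten

lemma mainWord_nil (π : V2 → V) (wt : V2 → ℕ) : mainWord π wt [] = [] := rfl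

lemma mainWord_cons (π : V2 → V) (wt : V2 → ℕ) (x : V2) (L : List V2) :
    mainWord π wt (x :: L) = List.replicate (wt x) (π x) ++ mainWord π wt L := by
  simp [mainWord]

lemma prodList_main (π : V2 → V) (wt : V2 → ℕ) (emb2 : V2 → S)
    (hB : ∀ p, B p = pbwFam a emb h p)
    (hordTrans : ∀ u v w, ord u v → ord v w → ord u w)
    (hordTri : ∀ u v, ord u v ∨ u = v ∨ ord v u)
    (hordWF : WellFounded ord)
    (hordMon : ∀ u v c d : List V, ord u v → ord (c ++ u ++ d) (c ++ v ++ d))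
    (hcompat : ∀ (l : List (J ⊕ V)) (m : List V),
      IsLeadingWord ord B ((l.map (Sum.elim a emb)).prod) m →
      ¬ ord (l.filterMap fun x => x.elim (fun _ => none) some) m)
    (hfac : ∀ x : V2, emb2 x - ((List.replicate (wt x) (π x)).map emb).prod ∈
      Mlt ord B (List.replicate (wt x) (π x)))
    (L : List V2) :
    (L.map emb2).prod - ((mainWord π wt L).map emb).prod ∈ Mlt ord B (mainWord π wt L) := by
  induction L with
  | nil => simp [mainWord_nil]
  | cons x L ih =>
    set w1 := List.replicate (wt x) (π x) with hw1
    set w' := mainWord π wt L with hw'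
    set e := (w1.map emb).prod with he
    set E := (w'.map emb).prod with hE
    set P := (L.map emb2).prod with hP
    have hL : mainWord π wt (x :: L) = w1 ++ w' := mainWord_cons π wt x L
    have key : emb2 x * P - ((w1 ++ w').map emb).prod
        = e * (P - E) + (emb2 x - e) * P := by
      rw [List.map_append, List.prod_append, ← he, ← hE]
      noncomm_ring
    rw [List.map_cons, List.prod_cons, hL, key]
    have hPle : P ∈ Mle ord B w' := by
      have h1 : P = (P - E) + E := by abel
      rw [h1]
      exact add_mem (Mlt_le_Mle ih)
        (word_prod_mem_Mle hordTrans hordTri hordWF hcompat w')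
    exact add_mem
      (mul_mem_Mle_Mlt hB hordTrans hordTri hordWF hordMon hcompat
        (word_prod_mem_Mle hordTrans hordTri hordWF hcompat w1) ih)
      (mul_mem_Mlt_Mle hB hordTrans hordTri hordWF hordMon hcompat (hfac x) hPle)

lemma toWord_map_sum {M : Type*} [AddCommMonoid M] (g : V2 →₀ ℕ) (φ : V2 → M) :
    ((toWord g).map φ).sum = ∑ x ∈ g.support, g x • φ x := by
  rw [toWord, List.map_flatten, List.map_map, List.sum_flatten, List.map_map]
  simp only [Function.comp_def, List.map_replicate, List.sum_replicate]
  exact sort_map_sum g.support _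

lemma count_mainWord (π : V2 → V) (wt : V2 → ℕ) (L : List V2) (v : V) :
    (mainWord π wt L).count v = (L.map fun x => if π x = v then wt x else 0).sum := by
  rw [mainWord, List.count_flatten, List.map_map]
  congr 1
  apply List.map_congr_left
  intro x _
  simp [List.count_replicate]

lemma count_mainWord_toWord (π : V2 → V) (wt : V2 → ℕ) (g : V2 →₀ ℕ) (v : V) :
    (mainWord π wt (toWord g)).count v
      = ∑ x ∈ g.support, g x * (if π x = v then wt x else 0) := by
  rw [count_mainWord, toWord_map_sum g (fun x => if π x = v then wt x else 0)]
  simp [smul_eq_mul]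

lemma mainWord_sorted (π : V2 → V) (wt : V2 → ℕ) (hπ : Monotone π)
    (L : List V2) (hL : L.Pairwise (· ≤ ·)) :
    (mainWord π wt L).Pairwise (· ≤ ·) := by
  rw [mainWord, List.pairwise_flatten]
  refine ⟨?_, ?_⟩
  · intro l hl
    simp only [List.mem_map] at hl
    obtain ⟨x, _, rfl⟩ := hl
    exact List.pairwise_replicate.2 (Or.inr le_rfl)
  · rw [List.pairwise_map]
    refine List.Pairwise.imp_of_mem ?_ hL
    intro x y _ _ hxy u hu w hw
    rw [List.eq_of_mem_replicate hu, List.eq_of_mem_replicate hw]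
    exact hπ hxy

lemma mainWord_toWord_eq (π : V2 → V) (wt : V2 → ℕ) (hπ : Monotone π)
    (g : V2 →₀ ℕ) (F : V →₀ ℕ)
    (hF : ∀ v, F v = ∑ x ∈ g.support, g x * (if π x = v then wt x else 0)) :
    mainWord π wt (toWord g) = toWord F := by
  refine List.Perm.eq_of_pairwise' (mainWord_sorted π wt hπ _ (toWord_sorted g))
    (toWord_sorted F) (List.perm_iff_count.2 fun v => ?_)
  rw [toWord_count, count_mainWord_toWord, hF]

end Thin

/-- Replacement of PBW-generators by thin elements: given a set of PBW-generators `V`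
of `S` over `A` (with `1 = a j₀` among the basis of `A`), a complete monoidal order
`ord` on words in `V` compatible with the PBW-decomposition, and a set `T` of thin
elements `c v = v^{m_v} + (ord-smaller terms)` for `v ∈ W` with `m_v` dividing the
height of `v` (or `h v = ∞`), the set `P_T` — consisting of the elements `c v` for
`v ∈ W` together with the generators `v` with `v ∉ W` or `m_v > 1`, with the heights
`h_{P_T}(v) = m_v` (for `v ∈ W`, `m_v > 1`), `h_{P_T}(c v) = h(v)/m_v`, ordered so
that `c v` precedes `v` and otherwise order is inherited from `V` — is again a set of
PBW-generators of `S` over `A`. -/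
theorem pbw_replacement_by_thin_elements
    {k S J V : Type*} [Field k] [Ring S] [Algebra k S] [LinearOrder V]
    (a : J → S) (emb : V → S) (h : V → ℕ∞)
    (B : Module.Basis (J × {f : V →₀ ℕ // Restricted h f}) k S)
    (hB : ∀ p, B p = pbwFam a emb h p)
    (j₀ : J) (hj₀ : a j₀ = 1)
    (ord : List V → List V → Prop)
    (hordTrans : ∀ u v w, ord u v → ord v w → ord u w)
    (hordTri : ∀ u v, ord u v ∨ u = v ∨ ord v u)
    (hordWF : WellFounded ord)
    (hordMon : ∀ u v c d : List V, ord u v → ord (c ++ u ++ d) (c ++ v ++ d))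
    (hcompat : ∀ (l : List (J ⊕ V)) (m : List V),
      IsLeadingWord ord B ((l.map (Sum.elim a emb)).prod) m →
      ¬ ord (l.filterMap fun x => x.elim (fun _ => none) some) m)
    (W : Set V) (c : V → S) (md : V → ℕ)
    (hthin : ∀ v ∈ W, 1 ≤ md v ∧ (md v : ℕ∞) < h v ∧
      (h v = ⊤ ∨ ∃ n : ℕ, h v = (n : ℕ∞) ∧ md v ∣ n) ∧
      c v - emb v ^ md v ∈ Submodule.span k
        {y | ∃ p : J × {f : V →₀ ℕ // Restricted h f},
          ord (toWord (p.2 : V →₀ ℕ)) (List.replicate (md v) v) ∧ y = B p}) :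
    ∃ li : LinearOrder ({v : V // v ∉ W ∨ 1 < md v} ⊕ {v : V // v ∈ W}),
      (∀ v w : {v : V // v ∉ W ∨ 1 < md v}, li.lt (Sum.inl v) (Sum.inl w) ↔ v.1 < w.1) ∧
      (∀ v w : {v : V // v ∈ W}, li.lt (Sum.inr v) (Sum.inr w) ↔ v.1 < w.1) ∧
      (∀ (v : {v : V // v ∈ W}) (w : {v : V // v ∉ W ∨ 1 < md v}),
        li.lt (Sum.inr v) (Sum.inl w) ↔ v.1 ≤ w.1) ∧
      @IsPBWBasis k S J ({v : V // v ∉ W ∨ 1 < md v} ⊕ {v : V // v ∈ W}) _ _ _ li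
        a
        (Sum.elim (fun p => emb p.1) (fun p => c p.1))
        (Sum.elim (fun p => if p.1 ∈ W then (md p.1 : ℕ∞) else h p.1)
          (fun p => if md p.1 = 1 then h p.1 else edivE (h p.1) (md p.1))) := by
  classical
  -- the order on the new set of generators, via an embedding into `V ×ₗ Bool`
  let pr : ({v : V // v ∉ W ∨ 1 < md v} ⊕ {v : V // v ∈ W}) → V × Bool :=
    Sum.elim (fun p => (p.1, true)) (fun p => (p.1, false))
  let ι : ({v : V // v ∉ W ∨ 1 < md v} ⊕ {v : V // v ∈ W}) → Lex (V × Bool) :=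
    fun x => toLex (pr x)
  have hprinj : ∀ x y, pr x = pr y → x = y := by
    rintro (x | x) (y | y) hxy <;>
      simp only [pr, Sum.elim_inl, Sum.elim_inr, Prod.mk.injEq] at hxy
    · exact congrArg Sum.inl (Subtype.ext hxy.1)
    · exact absurd hxy.2 (by simp)
    · exact absurd hxy.2 (by simp)
    · exact congrArg Sum.inr (Subtype.ext hxy.1)
  have hinj : Function.Injective ι := fun x y hxy => hprinj x y (toLex.injective hxy)
  letI li : LinearOrder ({v : V // v ∉ W ∨ 1 < md v} ⊕ {v : V // v ∈ W}) :=
    LinearOrder.lift' ι hinj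
  -- auxiliary data
  let π : ({v : V // v ∉ W ∨ 1 < md v} ⊕ {v : V // v ∈ W}) → V := fun x => (pr x).1
  let wt : ({v : V // v ∉ W ∨ 1 < md v} ⊕ {v : V // v ∈ W}) → ℕ :=
    Sum.elim (fun _ => 1) (fun p => md p.1)
  let emb2 : ({v : V // v ∉ W ∨ 1 < md v} ⊕ {v : V // v ∈ W}) → S :=
    Sum.elim (fun p => emb p.1) (fun p => c p.1)
  let h' : ({v : V // v ∉ W ∨ 1 < md v} ⊕ {v : V // v ∈ W}) → ℕ∞ :=
    Sum.elim (fun p => if p.1 ∈ W then (md p.1 : ℕ∞) else h p.1)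
      (fun p => if md p.1 = 1 then h p.1 else edivE (h p.1) (md p.1))
  have hπmono : ∀ x y, li.le x y → π x ≤ π y := by
    intro x y hxy
    have hle : ι x ≤ ι y := hxy
    rw [Prod.Lex.le_iff] at hle
    rcases hle with h1 | ⟨h1, -⟩
    · exact le_of_lt h1
    · exact le_of_eq h1
  have hirr : ∀ x, ¬ ord x x := fun x => (hordWF.isIrrefl).irrefl x
  have h'_inl : ∀ p, h' (Sum.inl p) = if p.1 ∈ W then (md p.1 : ℕ∞) else h p.1 := fun _ => rfl
  have h'_inr : ∀ p, h' (Sum.inr p)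
      = if md p.1 = 1 then h p.1 else edivE (h p.1) (md p.1) := fun _ => rfl
  have edivE_coe : ∀ (n m : ℕ), edivE (n : ℕ∞) m = ((n / m : ℕ) : ℕ∞) := fun _ _ => rfl
  -- the merged exponent function
  let comb : (({v : V // v ∉ W ∨ 1 < md v} ⊕ {v : V // v ∈ W}) →₀ ℕ) → (V →₀ ℕ) :=
    fun g => Finsupp.onFinset (g.support.image π)
      (fun v => ∑ x ∈ g.support, g x * (if π x = v then wt x else 0))
      (fun v hv => by
        rw [Finset.mem_image]
        by_contra hne
        push_neg at hne
        exact hv (Finset.sum_eq_zero fun x hx => by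
          rw [if_neg (hne x hx), mul_zero]))
  have comb_eval : ∀ g v, comb g v
      = (if hv : v ∈ W then md v * g (Sum.inr ⟨v, hv⟩) else 0)
        + (if hv' : v ∉ W ∨ 1 < md v then g (Sum.inl ⟨v, hv'⟩) else 0) := by
    intro g v
    have hstep : comb g v = ∑ x ∈ g.support.filter (fun x => π x = v), g x * wt x := by
      show (∑ x ∈ g.support, g x * (if π x = v then wt x else 0)) = _
      rw [Finset.sum_filter]
      refine Finset.sum_congr rfl fun x _ => ?_
      rw [mul_ite, mul_zero]
    by_cases hv : v ∈ W <;> by_cases hv' : v ∉ W ∨ 1 < md v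
    · rw [hstep, dif_pos hv, dif_pos hv']
      have hsub : g.support.filter (fun x => π x = v)
          ⊆ {Sum.inl ⟨v, hv'⟩, Sum.inr ⟨v, hv⟩} := by
        intro x hx
        obtain ⟨-, hπx⟩ := Finset.mem_filter.mp hx
        rcases x with p | p
        · have hpv : p.1 = v := hπx
          exact Finset.mem_insert.mpr (Or.inl (congrArg Sum.inl (Subtype.ext hpv)))
        · have hpv : p.1 = v := hπx
          exact Finset.mem_insert.mpr (Or.inr (Finset.mem_singleton.mpr
            (congrArg Sum.inr (Subtype.ext hpv))))
      rw [Finset.sum_subset hsub (fun x hx hnx => by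
        have hπx : π x = v := by
          rcases Finset.mem_insert.mp hx with rfl | hx'
          · rfl
          · rw [Finset.mem_singleton.mp hx']
            rfl
        have hxs : x ∉ g.support := fun hmem => hnx (Finset.mem_filter.mpr ⟨hmem, hπx⟩)
        rw [Finsupp.notMem_support_iff.mp hxs, zero_mul])]
      rw [Finset.sum_pair (by simp : (Sum.inl ⟨v, hv'⟩ : {v : V // v ∉ W ∨ 1 < md v} ⊕ {v : V // v ∈ W}) ≠ Sum.inr ⟨v, hv⟩)]
      show g (Sum.inl ⟨v, hv'⟩) * 1 + g (Sum.inr ⟨v, hv⟩) * md v = _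
      ring
    · rw [hstep, dif_pos hv, dif_neg hv']
      have hsub : g.support.filter (fun x => π x = v) ⊆ {Sum.inr ⟨v, hv⟩} := by
        intro x hx
        obtain ⟨-, hπx⟩ := Finset.mem_filter.mp hx
        rcases x with p | p
        · have hpv : p.1 = v := hπx
          exact absurd (hpv ▸ p.2) hv'
        · have hpv : p.1 = v := hπx
          exact Finset.mem_singleton.mpr (congrArg Sum.inr (Subtype.ext hpv))
      rw [Finset.sum_subset hsub (fun x hx hnx => by
        have hπx : π x = v := by rw [Finset.mem_singleton.mp hx]; rfl
        have hxs : x ∉ g.support := fun hmem => hnx (Finset.mem_filter.mpr ⟨hmem, hπx⟩)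
        rw [Finsupp.notMem_support_iff.mp hxs, zero_mul])]
      rw [Finset.sum_singleton]
      show g (Sum.inr ⟨v, hv⟩) * md v = _
      ring
    · rw [hstep, dif_neg hv, dif_pos hv']
      have hsub : g.support.filter (fun x => π x = v) ⊆ {Sum.inl ⟨v, hv'⟩} := by
        intro x hx
        obtain ⟨-, hπx⟩ := Finset.mem_filter.mp hx
        rcases x with p | p
        · have hpv : p.1 = v := hπx
          exact Finset.mem_singleton.mpr (congrArg Sum.inl (Subtype.ext hpv))
        · have hpv : p.1 = v := hπx
          exact absurd (hpv ▸ p.2) hv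
      rw [Finset.sum_subset hsub (fun x hx hnx => by
        have hπx : π x = v := by rw [Finset.mem_singleton.mp hx]; rfl
        have hxs : x ∉ g.support := fun hmem => hnx (Finset.mem_filter.mpr ⟨hmem, hπx⟩)
        rw [Finsupp.notMem_support_iff.mp hxs, zero_mul])]
      rw [Finset.sum_singleton]
      show g (Sum.inl ⟨v, hv'⟩) * 1 = _
      ring
    · exact absurd (Or.inl hv) hv'
  -- the splitting of an exponent function
  let sfun : (V →₀ ℕ) → ({v : V // v ∉ W ∨ 1 < md v} ⊕ {v : V // v ∈ W}) → ℕ :=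
    fun f => Sum.elim (fun p => if p.1 ∈ W then f p.1 % md p.1 else f p.1)
      (fun p => f p.1 / md p.1)
  have sfun_fin : ∀ f, (Function.support (sfun f)).Finite := by
    intro f
    apply Set.Finite.subset (Set.Finite.union
      (((f.support.finite_toSet).preimage (Subtype.val_injective.injOn)).image Sum.inl)
      (((f.support.finite_toSet).preimage (Subtype.val_injective.injOn)).image Sum.inr))
    rintro (p | p) hx
    · refine Or.inl ⟨p, ?_, rfl⟩
      simp only [Set.mem_preimage, Finset.mem_coe, Finsupp.mem_support_iff]
      simp only [Function.mem_support, sfun, Sum.elim_inl] at hx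
      intro h0
      apply hx
      rw [h0]
      split <;> simp
    · refine Or.inr ⟨p, ?_, rfl⟩
      simp only [Set.mem_preimage, Finset.mem_coe, Finsupp.mem_support_iff]
      simp only [Function.mem_support, sfun, Sum.elim_inr] at hx
      intro h0
      apply hx
      rw [h0]
      simp
  let splitF : (V →₀ ℕ) → (({v : V // v ∉ W ∨ 1 < md v} ⊕ {v : V // v ∈ W}) →₀ ℕ) :=
    fun f => Finsupp.ofSupportFinite (sfun f) (sfun_fin f)
  have splitF_inl : ∀ f p, splitF f (Sum.inl p)
      = if p.1 ∈ W then f p.1 % md p.1 else f p.1 := fun _ _ => rfl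
  have splitF_inr : ∀ f p, splitF f (Sum.inr p) = f p.1 / md p.1 := fun _ _ => rfl
  -- restriction transfer
  have hcombres : ∀ g, Restricted h' g → Restricted h (comb g) := by
    intro g hg v
    rw [comb_eval]
    by_cases hv : v ∈ W
    · obtain ⟨hmd1, hmdh, hdvd, -⟩ := hthin v hv
      rw [dif_pos hv]
      by_cases hmd : 1 < md v
      · have ht : (if hv' : v ∉ W ∨ 1 < md v then g (Sum.inl ⟨v, hv'⟩) else 0) < md v := by
          rw [dif_pos (Or.inr hmd)]
          have h1 := hg (Sum.inl ⟨v, Or.inr hmd⟩)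
          rw [h'_inl, if_pos hv] at h1
          exact_mod_cast h1
        have hs := hg (Sum.inr ⟨v, hv⟩)
        rw [h'_inr, if_neg (by omega : ¬ md v = 1)] at hs
        rcases hdvd with htop | ⟨n, hn, hnd⟩
        · rw [htop]
          exact ENat.coe_lt_top _
        · rw [hn, edivE_coe] at hs
          rw [hn]
          have hs' : g (Sum.inr ⟨v, hv⟩) < n / md v := by exact_mod_cast hs
          have hfin : md v * g (Sum.inr ⟨v, hv⟩)
              + (if hv' : v ∉ W ∨ 1 < md v then g (Sum.inl ⟨v, hv'⟩) else 0) < n := by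
            calc md v * g (Sum.inr ⟨v, hv⟩)
                + (if hv' : v ∉ W ∨ 1 < md v then g (Sum.inl ⟨v, hv'⟩) else 0)
                < md v * g (Sum.inr ⟨v, hv⟩) + md v := Nat.add_lt_add_left ht _
              _ = md v * (g (Sum.inr ⟨v, hv⟩) + 1) := by ring
              _ ≤ md v * (n / md v) := Nat.mul_le_mul_left _ (Nat.succ_le_of_lt hs')
              _ = n := Nat.mul_div_cancel' hnd
          exact_mod_cast hfin
      · have hmd1' : md v = 1 := by omega
        rw [dif_neg (fun hcon => hcon.elim (fun hnw => hnw hv) (fun h1 => hmd h1))]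
        have hs := hg (Sum.inr ⟨v, hv⟩)
        rw [h'_inr, if_pos hmd1'] at hs
        rw [hmd1']
        simpa using hs
    · rw [dif_neg hv, dif_pos (Or.inl hv)]
      have h1 := hg (Sum.inl ⟨v, Or.inl hv⟩)
      rw [h'_inl, if_neg hv] at h1
      simpa using h1
  have hsplitres : ∀ f, Restricted h f → Restricted h' (splitF f) := by
    intro f hf x
    rcases x with p | p
    · rw [splitF_inl, h'_inl]
      by_cases hw : p.1 ∈ W
      · obtain ⟨hmd1, -, -, -⟩ := hthin p.1 hw
        have hmd : 1 < md p.1 := p.2.resolve_left (not_not_intro hw)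
        rw [if_pos hw, if_pos hw]
        exact_mod_cast Nat.mod_lt _ (by omega)
      · rw [if_neg hw, if_neg hw]
        exact hf p.1
    · obtain ⟨hmd1, hmdh, hdvd, -⟩ := hthin p.1 p.2
      rw [splitF_inr, h'_inr]
      by_cases hmd : md p.1 = 1
      · rw [if_pos hmd, hmd, Nat.div_one]
        exact hf p.1
      · rw [if_neg hmd]
        rcases hdvd with htop | ⟨n, hn, hnd⟩
        · rw [htop]
          exact ENat.coe_lt_top _
        · rw [hn, edivE_coe]
          have hlt : f p.1 < n := by
            have := hf p.1
            rw [hn] at this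
            exact_mod_cast this
          exact_mod_cast Nat.div_lt_div_of_lt_of_dvd hnd hlt
  have hcombsplit : ∀ f : V →₀ ℕ, comb (splitF f) = f := by
    intro f
    ext v
    rw [comb_eval]
    by_cases hv : v ∈ W
    · obtain ⟨hmd1, -, -, -⟩ := hthin v hv
      rw [dif_pos hv, splitF_inr]
      by_cases hmd : 1 < md v
      · rw [dif_pos (Or.inr hmd), splitF_inl, if_pos hv]
        exact Nat.div_add_mod _ _
      · have hmd1' : md v = 1 := by omega
        rw [dif_neg (fun hcon => hcon.elim (fun hnw => hnw hv) (fun h1 => hmd h1)), hmd1']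
        simp
    · rw [dif_neg hv, dif_pos (Or.inl hv), splitF_inl, if_neg hv, zero_add]
  have hsplitcomb : ∀ g, Restricted h' g → splitF (comb g) = g := by
    intro g hg
    ext x
    rcases x with p | p
    · rw [splitF_inl]
      by_cases hw : p.1 ∈ W
      · have hmd : 1 < md p.1 := p.2.resolve_left (not_not_intro hw)
        have hteq : (Sum.inl ⟨p.1, Or.inr hmd⟩ :
            {v : V // v ∉ W ∨ 1 < md v} ⊕ {v : V // v ∈ W}) = Sum.inl p := by
          congr 1
        rw [if_pos hw, comb_eval, dif_pos hw, dif_pos (Or.inr hmd), hteq]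
        have ht : g (Sum.inl p) < md p.1 := by
          have h1 := hg (Sum.inl p)
          rw [h'_inl, if_pos hw] at h1
          exact_mod_cast h1
        rw [Nat.mul_add_mod]
        exact Nat.mod_eq_of_lt ht
      · have hteq : (Sum.inl ⟨p.1, Or.inl hw⟩ :
            {v : V // v ∉ W ∨ 1 < md v} ⊕ {v : V // v ∈ W}) = Sum.inl p := by
          congr 1
        rw [if_neg hw, comb_eval, dif_neg hw, dif_pos (Or.inl hw), zero_add, hteq]
    · obtain ⟨hmd1, -, -, -⟩ := hthin p.1 p.2
      have hteq : (Sum.inr ⟨p.1, p.2⟩ :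
          {v : V // v ∉ W ∨ 1 < md v} ⊕ {v : V // v ∈ W}) = Sum.inr p := by
        congr 1
      rw [splitF_inr, comb_eval, dif_pos p.2, hteq]
      by_cases hmd : 1 < md p.1
      · rw [dif_pos (Or.inr hmd)]
        have ht : g (Sum.inl ⟨p.1, Or.inr hmd⟩) < md p.1 := by
          have h1 := hg (Sum.inl ⟨p.1, Or.inr hmd⟩)
          rw [h'_inl, if_pos p.2] at h1
          exact_mod_cast h1
        rw [Nat.mul_add_div (by omega), Nat.div_eq_of_lt ht, add_zero]
      · have hmd1' : md p.1 = 1 := by omega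
        rw [dif_neg (fun hcon => hcon.elim (fun hnw => hnw p.2) (fun h1 => hmd h1)), hmd1']
        simp
  -- the factorization hypothesis for the new generators
  have hfac : ∀ x, emb2 x - ((List.replicate (wt x) (π x)).map emb).prod ∈
      Mlt ord B (List.replicate (wt x) (π x)) := by
    rintro (p | p)
    · show emb p.1 - ((List.replicate 1 p.1).map emb).prod ∈ Mlt ord B (List.replicate 1 p.1)
      simp only [List.replicate_one, List.map_cons, List.map_nil, List.prod_cons,
        List.prod_nil, mul_one, sub_self]
      exact zero_mem _
    · show c p.1 - ((List.replicate (md p.1) p.1).map emb).prod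
        ∈ Mlt ord B (List.replicate (md p.1) p.1)
      have h1 : ((List.replicate (md p.1) p.1).map emb).prod = emb p.1 ^ md p.1 := by
        rw [List.map_replicate, List.prod_replicate]
      rw [h1]
      obtain ⟨-, -, -, hcv⟩ := hthin p.1 p.2
      have hset : (⇑B '' {q | ord (toWord (q.2 : V →₀ ℕ)) (List.replicate (md p.1) p.1)})
          = {y | ∃ q : J × {f : V →₀ ℕ // Restricted h f},
              ord (toWord (q.2 : V →₀ ℕ)) (List.replicate (md p.1) p.1) ∧ y = B q} := by
        ext y
        constructor
        · rintro ⟨q, hq, rfl⟩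
          exact ⟨q, hq, rfl⟩
        · rintro ⟨q, hq, rfl⟩
          exact ⟨q, hq, rfl⟩
      rw [Mlt, hset]
      exact hcv
  -- the key triangularity statement
  have hKEY : ∀ (j : J) (g) (hg : Restricted h' g),
      pbwFam a emb2 h' (j, ⟨g, hg⟩) - B (j, ⟨comb g, hcombres g hg⟩)
        ∈ Mlt ord B (toWord (comb g)) := by
    intro j g hg
    have hw : mainWord π wt (toWord g) = toWord (comb g) :=
      mainWord_toWord_eq π wt hπmono g (comb g) (fun v => rfl)
    have hmain := prodList_main π wt emb2 hB hordTrans hordTri hordWF hordMon hcompat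
      hfac (toWord g)
    rw [hw] at hmain
    have haj : a j ∈ Mle ord B [] := by
      have h2 := prodList_mem_Mle hordTrans hordTri hordWF hcompat [Sum.inl j]
      change ([Sum.inl j].map (Sum.elim a emb)).prod ∈ Mle ord B [] at h2
      simpa using h2
    have hmul := mul_mem_Mle_Mlt hB hordTrans hordTri hordWF hordMon hcompat haj hmain
    have heq : pbwFam a emb2 h' (j, ⟨g, hg⟩) - B (j, ⟨comb g, hcombres g hg⟩)
        = a j * (((toWord g).map emb2).prod - ((toWord (comb g)).map emb).prod) := by
      rw [mul_sub]
      congr 1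
      · show a j * pbwProd emb2 g = _
        rw [pbwProd_eq_prod_map]
      · rw [hB]
        show a j * pbwProd emb (comb g) = _
        rw [pbwProd_eq_prod_map]
    rw [heq]
    simpa using hmul
  -- the new family and the leading-index map
  have hcoeff0 : ∀ (s : S) (u : List V), s ∈ Mlt ord B u →
      ∀ q : J × {f : V →₀ ℕ // Restricted h f},
        ¬ ord (toWord (q.2 : V →₀ ℕ)) u → B.repr s q = 0 := by
    intro s u hs q hq
    rw [Mlt, Module.Basis.mem_span_image] at hs
    by_contra h0
    exact hq (hs (Finset.mem_coe.mpr (Finsupp.mem_support_iff.mpr h0)))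
  let D : (J × {f // Restricted h' f}) → (J × {f : V →₀ ℕ // Restricted h f}) :=
    fun i => (i.1, ⟨comb i.2.1, hcombres i.2.1 i.2.2⟩)
  have hKEY' : ∀ i, pbwFam a emb2 h' i - B (D i) ∈ Mlt ord B (toWord (comb i.2.1)) :=
    fun i => hKEY i.1 i.2.1 i.2.2
  have hDinj : Function.Injective D := by
    intro x y hxy
    have h1 := congrArg Prod.fst hxy
    have h2 := congrArg (fun z : J × {f : V →₀ ℕ // Restricted h f} => (z.2 : V →₀ ℕ)) hxy
    have h1' : x.1 = y.1 := h1
    have h2' : comb x.2.1 = comb y.2.1 := h2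
    have h3 : x.2.1 = y.2.1 := by
      rw [← hsplitcomb _ x.2.2, ← hsplitcomb _ y.2.2, h2']
    exact Prod.ext h1' (Subtype.ext h3)
  have hrepr : ∀ i, B.repr (pbwFam a emb2 h' i)
      = Finsupp.single (D i) 1 + B.repr (pbwFam a emb2 h' i - B (D i)) := by
    intro i
    have h1 : pbwFam a emb2 h' i = B (D i) + (pbwFam a emb2 h' i - B (D i)) := by abel
    conv_lhs => rw [h1]
    rw [map_add, Module.Basis.repr_self]
  refine ⟨li, ?_, ?_, ?_, ?_, ?_⟩
  · intro v w
    show ι (Sum.inl v) < ι (Sum.inl w) ↔ v.1 < w.1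
    rw [Prod.Lex.lt_iff]
    simp [pr, ι]
  · intro v w
    show ι (Sum.inr v) < ι (Sum.inr w) ↔ v.1 < w.1
    rw [Prod.Lex.lt_iff]
    simp [pr, ι]
  · intro v w
    show ι (Sum.inr v) < ι (Sum.inl w) ↔ v.1 ≤ w.1
    rw [Prod.Lex.lt_iff]
    simp only [pr, ι, ofLex_toLex, Sum.elim_inl, Sum.elim_inr]
    constructor
    · rintro (h1 | ⟨h1, -⟩)
      · exact le_of_lt h1
      · exact le_of_eq h1
    · intro h1
      rcases lt_or_eq_of_le h1 with h2 | h2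
      · exact Or.inl h2
      · exact Or.inr ⟨h2, by simp⟩
  -- linear independence
  · rw [linearIndependent_iff]
    intro l hl
    by_contra hlne
    have hsupne : l.support.Nonempty := Finsupp.support_nonempty_iff.mpr hlne
    obtain ⟨m, hm, hmax⟩ := exists_ord_max ord hordTrans hordTri
      (l.support.image fun i => toWord (comb i.2.1)) (hsupne.image _)
    obtain ⟨i, hi, him⟩ := Finset.mem_image.mp hm
    have h0 := congrArg (fun s => B.repr s (D i)) hl
    simp only [map_zero, Finsupp.coe_zero, Pi.zero_apply] at h0
    rw [Finsupp.linearCombination_apply, Finsupp.sum, map_sum, Finset.sum_apply'] at h0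
    rw [Finset.sum_eq_single i (fun i' hi' hne => ?_) (fun hni => ?_)] at h0
    · rw [map_smul, Finsupp.smul_apply, smul_eq_mul] at h0
      have h1 : B.repr (pbwFam a emb2 h' i) (D i) = 1 := by
        rw [hrepr i, Finsupp.add_apply, Finsupp.single_eq_same]
        have h2 : B.repr (pbwFam a emb2 h' i - B (D i)) (D i) = 0 := by
          refine hcoeff0 _ _ (hKEY' i) (D i) ?_
          show ¬ ord (toWord (comb i.2.1)) (toWord (comb i.2.1))
          exact hirr _
        rw [h2, add_zero]
      rw [h1, mul_one] at h0
      exact (Finsupp.mem_support_iff.mp hi) h0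
    · rw [map_smul, Finsupp.smul_apply, smul_eq_mul]
      have hz : B.repr (pbwFam a emb2 h' i') (D i) = 0 := by
        rw [hrepr i', Finsupp.add_apply]
        have hs0 : Finsupp.single (D i') (1 : k) (D i) = 0 :=
          Finsupp.single_eq_of_ne (fun hDD => hne (hDinj hDD.symm))
        have he0 : B.repr (pbwFam a emb2 h' i' - B (D i')) (D i) = 0 := by
          refine hcoeff0 _ _ (hKEY' i') (D i) ?_
          show ¬ ord (toWord (comb i.2.1)) (toWord (comb i'.2.1))
          rcases hmax _ (Finset.mem_image_of_mem _ hi') with heq | hlt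
          · rw [him, heq]
            exact hirr _
          · rw [him]
            intro hcon
            exact hirr _ (hordTrans _ _ _ hcon hlt)
        rw [hs0, he0, add_zero]
      rw [hz, mul_zero]
    · rw [Finsupp.notMem_support_iff.mp hni]
      simp
  -- spanning
  · rw [eq_top_iff, ← B.span_eq, Submodule.span_le]
    rintro - ⟨q, rfl⟩
    refine hordWF.induction (C := fun w => ∀ q : J × {f : V →₀ ℕ // Restricted h f},
        toWord (q.2 : V →₀ ℕ) = w →
        (B q : S) ∈ Submodule.span k (Set.range (pbwFam a emb2 h')))
      (toWord (q.2 : V →₀ ℕ)) ?_ q rfl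
    intro w ih q hq
    have hg : Restricted h' (splitF q.2.1) := hsplitres _ q.2.2
    have hcg : comb (splitF q.2.1) = q.2.1 := hcombsplit q.2.1
    have hkey := hKEY q.1 (splitF q.2.1) hg
    have hBeq : B (q.1, ⟨comb (splitF q.2.1), hcombres _ hg⟩) = B q := by
      congr 1
      exact Prod.ext rfl (Subtype.ext hcg)
    rw [hBeq] at hkey
    have hwrd : toWord (comb (splitF q.2.1)) = w := by rw [hcg, hq]
    rw [hwrd] at hkey
    have hleS : Mlt ord B w ≤ Submodule.span k (Set.range (pbwFam a emb2 h')) := by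
      rw [Mlt, Submodule.span_le]
      rintro - ⟨r, hr, rfl⟩
      exact ih (toWord (r.2 : V →₀ ℕ)) hr r rfl
    have hF : pbwFam a emb2 h' (q.1, ⟨splitF q.2.1, hg⟩)
        ∈ Submodule.span k (Set.range (pbwFam a emb2 h')) :=
      Submodule.subset_span ⟨_, rfl⟩
    have hqeq : (B q : S) = pbwFam a emb2 h' (q.1, ⟨splitF q.2.1, hg⟩)
        - (pbwFam a emb2 h' (q.1, ⟨splitF q.2.1, hg⟩) - B q) := by abel
    rw [hqeq]
    exact sub_mem hF (hleS hkey)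
end
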